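/- For nonnegative integers n, a, i, k with i ≤ k ≤ n-1-a, modulo Φ_n(q): Σ_{k=j}^{n-1-a} q^{k²+k-j(k-j)} qbinom(n-1-a-i, k-i) qbinom(a, k-j) ≡ q^{a²+a+j²+j+aj} qbinom(n-1-i, n-1-a-j) (mod Φ_n(q)), for all 1 ≤ j ≤ n-1-a and 0 ≤ i ≤ j, where the congruence holds in ℤ[q, q^{-1}] after multiplying by a q-power. -/

import Mathlib

open Polynomial Finset

/-- The variable `q` as a rational function over `ℚ`. -/
noncomputable def qv : RatFunc ℚ := RatFunc.X

/-- The q-Pochhammer symbol `(x; t)_k = (1-x)(1-xt)⋯(1-xt^{k-1})`. -/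
noncomputable def qPochAt (x t : RatFunc ℚ) (k : ℕ) : RatFunc ℚ :=
  ∏ i ∈ Finset.range k, (1 - x * t ^ i)

/-- The Gaussian binomial coefficient `[α choose k]_t = (t^{α-k+1}; t)_k / (t; t)_k`
with integer upper argument. -/
noncomputable def qbinomAt (t : RatFunc ℚ) (α : ℤ) (k : ℕ) : RatFunc ℚ :=
  (∏ i ∈ Finset.range k, (1 - t ^ (α - k + 1 + i))) /
    (∏ i ∈ Finset.range k, (1 - t ^ (i + 1)))

/-- The Gaussian binomial coefficient in the variable `q`. -/
noncomputable def qbinom (α : ℤ) (k : ℕ) : RatFunc ℚ := qbinomAt qv α k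

/-- The image of an integer polynomial in `RatFunc ℚ`. -/
noncomputable def toF (g : Polynomial ℤ) : RatFunc ℚ :=
  Polynomial.aeval (RatFunc.X : RatFunc ℚ) g

/-- `A ≡ B (mod Φ_n(q)^m)` in the localization of `ℤ[q]` at polynomials coprime
to `Φ_n`: there are `f g : ℤ[q]` with `Φ_n ∤ g` and `(A - B) * g = Φ_n^m * f`. -/
def modCong (n m : ℕ) (A B : RatFunc ℚ) : Prop :=
  ∃ f g : Polynomial ℤ, ¬ (Polynomial.cyclotomic n ℤ ∣ g) ∧
    (A - B) * toF g = toF ((Polynomial.cyclotomic n ℤ) ^ m * f)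

/-- The q-integer `[m]_q = (1-q^m)/(1-q)`. -/
noncomputable def qint (m : ℤ) : RatFunc ℚ := (1 - qv ^ m) / (1 - qv)


namespace S17


lemma qv_ne_zero : qv ≠ 0 := RatFunc.X_ne_zero

lemma qv_pow_ne_one {s : ℕ} (hs : 0 < s) : qv ^ s ≠ 1 := by
  intro h
  have h2 : algebraMap (Polynomial ℚ) (RatFunc ℚ) (X ^ s) =
      algebraMap (Polynomial ℚ) (RatFunc ℚ) 1 := by
    simpa [map_pow, RatFunc.algebraMap_X, qv] using h
  have h3 : (X : Polynomial ℚ) ^ s = 1 := IsFractionRing.injective (Polynomial ℚ) (RatFunc ℚ) h2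
  have := congrArg (fun p => Polynomial.coeff p 0) h3
  simp [Polynomial.coeff_X_pow, hs.ne'] at this
  omega

lemma one_sub_qv_pow_ne {s : ℕ} (hs : 0 < s) : (1 : RatFunc ℚ) - qv ^ s ≠ 0 :=
  fun h => qv_pow_ne_one hs (by linear_combination -h)

lemma qv_zpow_ne_zero (e : ℤ) : qv ^ e ≠ 0 := zpow_ne_zero e qv_ne_zero

noncomputable def dk (k : ℕ) : RatFunc ℚ := ∏ i ∈ Finset.range k, (1 - qv ^ (i + 1))

lemma dk_ne_zero (k : ℕ) : dk k ≠ 0 :=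
  Finset.prod_ne_zero_iff.mpr fun i _ => one_sub_qv_pow_ne (Nat.succ_pos i)

noncomputable def nm (α : ℤ) (k : ℕ) : RatFunc ℚ :=
  ∏ i ∈ Finset.range k, (1 - qv ^ (α - k + 1 + i))

lemma qbinom_eq (α : ℤ) (k : ℕ) : qbinom α k = nm α k / dk k := rfl

lemma qbinom_zero_right (α : ℤ) : qbinom α 0 = 1 := by
  simp [qbinom, qbinomAt]

lemma qbinom_zero_of_lt {m k : ℕ} (h : m < k) : qbinom (m : ℤ) k = 0 := by
  rw [qbinom_eq, nm, Finset.prod_eq_zero (i := k - m - 1) (by simp; omega), zero_div]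
  have : (m : ℤ) - k + 1 + (k - m - 1 : ℕ) = 0 := by omega
  rw [this, zpow_zero, sub_self]

lemma dk_succ (k : ℕ) : dk (k+1) = dk k * (1 - qv ^ (k+1)) := Finset.prod_range_succ _ k

lemma nm_succ_left (α : ℤ) (k : ℕ) : nm (α+1) (k+1) = nm α k * (1 - qv ^ (α+1)) := by
  rw [nm, Finset.prod_range_succ, nm]
  congr 1
  · apply Finset.prod_congr rfl; intro x _; congr 1; push_cast; ring
  · congr 1; push_cast; ring

lemma nm_succ_right (α : ℤ) (k : ℕ) : nm α (k+1) = nm α k * (1 - qv ^ (α - k)) := by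
  rw [nm, Finset.prod_range_succ', nm]
  congr 1
  · apply Finset.prod_congr rfl; intro x _; congr 1; push_cast; ring
  · congr 1; push_cast; ring


lemma pascal (α : ℤ) (k : ℕ) :
    qbinom (α+1) (k+1) = qbinom α (k+1) + qv ^ (α - k) * qbinom α k := by
  have e : qv ^ (α - (k:ℤ)) * qv ^ ((k:ℕ)+1) = qv ^ (α+1) := by
    rw [← zpow_natCast qv (k+1), ← zpow_add₀ qv_ne_zero]
    congr 1; push_cast; ring
  have key : (1 : RatFunc ℚ) - qv ^ (α+1)
      = (1 - qv ^ (α - (k:ℤ))) + qv ^ (α - (k:ℤ)) * (1 - qv ^ ((k:ℕ)+1)) := by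
    linear_combination e
  rw [qbinom_eq, qbinom_eq, qbinom_eq, nm_succ_left, nm_succ_right, dk_succ]
  have h1 := dk_ne_zero k
  have h2 := one_sub_qv_pow_ne (Nat.succ_pos k)
  field_simp
  linear_combination nm α k * key
lemma nm_dk {m k : ℕ} (h : k ≤ m) : nm (m:ℤ) k * dk (m-k) = dk m := by
  have hm : m = (m-k)+k := (Nat.sub_add_cancel h).symm
  rw [mul_comm]
  conv_rhs => rw [dk, hm, Finset.prod_range_add]
  congr 1
  rw [nm]
  apply Finset.prod_congr rfl
  intro x _
  rw [← zpow_natCast qv (m - k + x + 1)]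
  congr 1
  push_cast [Nat.cast_sub h]
  ring

lemma qbinom_symm {m k : ℕ} (h : k ≤ m) : qbinom (m:ℤ) k = qbinom (m:ℤ) (m-k) := by
  rw [qbinom_eq, qbinom_eq, div_eq_div_iff (dk_ne_zero _) (dk_ne_zero _),
    nm_dk h]
  have h3 := nm_dk (Nat.sub_le m k)
  rw [(by omega : m - (m - k) = k)] at h3
  rw [← h3]

lemma vandermonde (m p r : ℕ) :
    qbinom ((m:ℤ) + (p:ℤ)) r = ∑ l ∈ Finset.range (r+1),
      qbinom (m:ℤ) l * qbinom (p:ℤ) (r - l) * qv ^ (((m:ℤ) - l) * ((r:ℤ) - l)) := by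
  induction p generalizing r with
  | zero =>
    rw [Finset.sum_eq_single r]
    · simp [qbinom_zero_right]
    · intro l hl hne
      have hlt : l < r := by simp at hl; omega
      rw [qbinom_zero_of_lt (by omega : 0 < r - l)]
      ring
    · intro h; exact absurd (Finset.self_mem_range_succ r) h
  | succ p ih =>
    have hcast : ((m:ℤ) + (p:ℤ)) + 1 = (m:ℤ) + ((p+1 : ℕ) : ℤ) := by push_cast; ring
    cases r with
    | zero => simp [qbinom_zero_right, ← hcast, pascal]
    | succ r' =>
      have lhs_eq : qbinom ((m:ℤ) + ((p+1:ℕ):ℤ)) (r'+1)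
          = qbinom ((m:ℤ)+(p:ℤ)) (r'+1) + qv ^ ((m:ℤ) + p - r') * qbinom ((m:ℤ)+(p:ℤ)) r' := by
        rw [← hcast, pascal]
      set g : ℕ → RatFunc ℚ := fun l => qbinom (m:ℤ) l * qbinom (p:ℤ) (r'+1 - l)
            * qv ^ (((m:ℤ) - l) * (((r'+1:ℕ):ℤ) - l)) with hg
      set h : ℕ → RatFunc ℚ := fun l => qv ^ ((m:ℤ) + p - r') * (qbinom (m:ℤ) l
            * qbinom (p:ℤ) (r' - l) * qv ^ (((m:ℤ) - l) * (((r':ℕ):ℤ) - l))) with hh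
      have hsplit : ∀ l ∈ Finset.range (r'+1),
          qbinom (m:ℤ) l * qbinom ((p+1:ℕ):ℤ) (r'+1 - l)
            * qv ^ (((m:ℤ) - l) * (((r'+1:ℕ):ℤ) - l)) = g l + h l := by
        intro l hl
        have hlr : l ≤ r' := by simp at hl; omega
        have h1 : r'+1-l = (r'-l)+1 := by omega
        have h2 : ((p+1:ℕ):ℤ) = (p:ℤ)+1 := by push_cast; ring
        rw [h1, h2, pascal]
        have h3 : qv ^ ((p:ℤ) - ((r'-l : ℕ):ℤ)) * qv ^ (((m:ℤ) - l) * (((r'+1:ℕ):ℤ) - l))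
            = qv ^ ((m:ℤ) + p - r') * qv ^ (((m:ℤ) - l) * (((r':ℕ):ℤ) - l)) := by
          rw [← zpow_add₀ qv_ne_zero, ← zpow_add₀ qv_ne_zero]
          congr 1
          push_cast [Nat.cast_sub hlr]
          ring
        rw [hg, hh]
        simp only []
        rw [← h1]
        linear_combination qbinom (m:ℤ) l * qbinom (p:ℤ) (r'-l) * h3
      calc qbinom ((m:ℤ) + ((p+1:ℕ):ℤ)) (r'+1)
          = qbinom ((m:ℤ)+(p:ℤ)) (r'+1) + qv ^ ((m:ℤ) + p - r') * qbinom ((m:ℤ)+(p:ℤ)) r' := lhs_eq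
        _ = (∑ l ∈ Finset.range (r'+2), g l) + ∑ l ∈ Finset.range (r'+1), h l := by
            rw [ih (r'+1), ih r', Finset.mul_sum]
        _ = ((∑ l ∈ Finset.range (r'+1), g l) + g (r'+1)) + ∑ l ∈ Finset.range (r'+1), h l := by
            rw [Finset.sum_range_succ]
        _ = ((∑ l ∈ Finset.range (r'+1), (g l + h l)) + g (r'+1)) := by
            rw [Finset.sum_add_distrib]; ring
        _ = (∑ l ∈ Finset.range (r'+1), qbinom (m:ℤ) l * qbinom ((p+1:ℕ):ℤ) (r'+1 - l)
              * qv ^ (((m:ℤ) - l) * (((r'+1:ℕ):ℤ) - l)))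
            + qbinom (m:ℤ) (r'+1) * qbinom ((p+1:ℕ):ℤ) (r'+1 - (r'+1))
              * qv ^ (((m:ℤ) - (r'+1:ℕ)) * (((r'+1:ℕ):ℤ) - (r'+1:ℕ))) := by
            rw [Finset.sum_congr rfl hsplit]
            congr 1
            rw [hg]
            simp [qbinom_zero_right, sub_self]
        _ = ∑ l ∈ Finset.range (r'+1+1), qbinom (m:ℤ) l * qbinom ((p+1:ℕ):ℤ) (r'+1 - l)
              * qv ^ (((m:ℤ) - l) * (((r'+1:ℕ):ℤ) - l)) := by
            exact (Finset.sum_range_succ _ (r'+1)).symm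
/-- `X` is good if `X * g/1 = Φₙ f /1` with `Φₙ ∤ g`. -/
def Good (n : ℕ) (A : RatFunc ℚ) : Prop :=
  ∃ f g : Polynomial ℤ, ¬ (Polynomial.cyclotomic n ℤ ∣ g) ∧
    A * toF g = toF (Polynomial.cyclotomic n ℤ * f)

def Reg (n : ℕ) (A : RatFunc ℚ) : Prop :=
  ∃ p s : Polynomial ℤ, ¬ (Polynomial.cyclotomic n ℤ ∣ s) ∧ A * toF s = toF p

variable {n : ℕ} (hn : 0 < n)

lemma cyc_prime (hn : 0 < n) : Prime (Polynomial.cyclotomic n ℤ) :=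
  UniqueFactorizationMonoid.irreducible_iff_prime.mp (cyclotomic.irreducible hn)

lemma not_dvd_one (hn : 0 < n) : ¬ (Polynomial.cyclotomic n ℤ ∣ 1) :=
  fun hd => (cyclotomic.irreducible hn).not_isUnit (isUnit_of_dvd_one hd)

lemma modCong_of_good {A B : RatFunc ℚ} (h : Good n (A - B)) : modCong n 1 A B := by
  obtain ⟨f, g, h1, h2⟩ := h
  exact ⟨f, g, h1, by rwa [pow_one]⟩

lemma good_zero (hn : 0 < n) : Good n 0 := ⟨0, 1, not_dvd_one hn, by simp [toF]⟩

lemma good_add (hn : 0 < n) {A B : RatFunc ℚ} (hA : Good n A) (hB : Good n B) :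
    Good n (A + B) := by
  obtain ⟨f1, g1, h1, e1⟩ := hA
  obtain ⟨f2, g2, h2, e2⟩ := hB
  refine ⟨f1 * g2 + f2 * g1, g1 * g2, ?_, ?_⟩
  · intro hd
    rcases (cyc_prime hn).dvd_mul.mp hd with h | h
    exacts [h1 h, h2 h]
  · have : (A + B) * toF (g1 * g2) = (A * toF g1) * toF g2 + (B * toF g2) * toF g1 := by
      simp only [toF, map_mul]; ring
    rw [this, e1, e2]
    simp only [toF, map_mul, map_add]; ring

lemma good_sum (hn : 0 < n) {ι : Type*} (s : Finset ι) (f : ι → RatFunc ℚ)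
    (h : ∀ x ∈ s, Good n (f x)) : Good n (∑ x ∈ s, f x) := by
  classical
  induction s using Finset.induction with
  | empty => simpa using good_zero hn
  | insert _ _ hx ih =>
    rw [Finset.sum_insert hx]
    exact good_add hn (h _ (Finset.mem_insert_self _ _))
      (ih fun x hxs => h x (Finset.mem_insert_of_mem hxs))

lemma good_mul_reg (hn : 0 < n) {A B : RatFunc ℚ} (hA : Reg n A) (hB : Good n B) :
    Good n (A * B) := by
  obtain ⟨p, s, h1, e1⟩ := hA
  obtain ⟨f, g, h2, e2⟩ := hB
  refine ⟨p * f, s * g, ?_, ?_⟩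
  · intro hd
    rcases (cyc_prime hn).dvd_mul.mp hd with h | h
    exacts [h1 h, h2 h]
  · have : (A * B) * toF (s * g) = (A * toF s) * (B * toF g) := by
      simp only [toF, map_mul]; ring
    rw [this, e1, e2]
    simp only [toF, map_mul]; ring

lemma reg_mul (hn : 0 < n) {A B : RatFunc ℚ} (hA : Reg n A) (hB : Reg n B) :
    Reg n (A * B) := by
  obtain ⟨p1, s1, h1, e1⟩ := hA
  obtain ⟨p2, s2, h2, e2⟩ := hB
  refine ⟨p1 * p2, s1 * s2, ?_, ?_⟩
  · intro hd
    rcases (cyc_prime hn).dvd_mul.mp hd with h | h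
    exacts [h1 h, h2 h]
  · have : (A * B) * toF (s1 * s2) = (A * toF s1) * (B * toF s2) := by
      simp only [toF, map_mul]; ring
    rw [this, e1, e2, toF, toF, toF, map_mul]

lemma toF_X_pow (a : ℕ) : toF (X ^ a) = qv ^ a := by
  simp [toF, qv]

lemma not_dvd_X_pow (hn : 0 < n) (a : ℕ) : ¬ (Polynomial.cyclotomic n ℤ ∣ X ^ a) := by
  intro hd
  rcases Nat.eq_zero_or_pos a with rfl | ha
  · exact not_dvd_one hn (by simpa using hd)
  · have h1 : Polynomial.cyclotomic n ℤ ∣ X ^ (a * n) := hd.trans (pow_dvd_pow X (by nlinarith))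
    have h2 : Polynomial.cyclotomic n ℤ ∣ (X : Polynomial ℤ) ^ (a * n) - 1 := by
      have h3 : (X : Polynomial ℤ) ^ n - 1 ∣ (X : Polynomial ℤ) ^ (a * n) - 1 := by
        have := sub_dvd_pow_sub_pow ((X : Polynomial ℤ) ^ n) 1 a
        simpa [← pow_mul, mul_comm] using this
      exact (cyclotomic.dvd_X_pow_sub_one n ℤ).trans h3
    exact not_dvd_one hn (by simpa using dvd_sub h1 h2)

lemma not_dvd_X_pow_sub_one (hn : 0 < n) {s : ℕ} (hs : 0 < s) (hsn : s < n) :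
    ¬ (Polynomial.cyclotomic n ℤ ∣ (X : Polynomial ℤ) ^ s - 1) := by
  intro hd
  rw [← prod_cyclotomic_eq_X_pow_sub_one hs ℤ] at hd
  obtain ⟨d, hds, hdvd⟩ := ((cyc_prime hn).dvd_finset_prod_iff _).mp hd
  have hd0 : 0 < d := Nat.pos_of_mem_divisors hds
  have hassoc := (cyclotomic.irreducible hn).associated_of_dvd (cyclotomic.irreducible hd0) hdvd
  have heq := Polynomial.eq_of_monic_of_associated (cyclotomic.monic n ℤ) (cyclotomic.monic d ℤ) hassoc
  have : n = d := cyclotomic_injective heq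
  have : d ≤ s := Nat.le_of_dvd hs (Nat.dvd_of_mem_divisors hds)
  omega

lemma reg_qv_zpow (hn : 0 < n) (e : ℤ) : Reg n (qv ^ e) := by
  rcases le_or_gt 0 e with he | he
  · lift e to ℕ using he
    exact ⟨X ^ e, 1, not_dvd_one hn, by rw [toF_X_pow]; simp [toF, zpow_natCast]⟩
  · refine ⟨1, X ^ (-e).toNat, not_dvd_X_pow hn _, ?_⟩
    rw [toF_X_pow]
    have : (qv : RatFunc ℚ) ^ ((-e).toNat) = qv ^ (-e) := by
      rw [← zpow_natCast]; congr 1; omega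
    rw [this, ← zpow_add₀ qv_ne_zero]
    simp [toF]

lemma reg_zero (hn : 0 < n) : Reg n 0 := ⟨0, 1, not_dvd_one hn, by simp [toF]⟩

lemma reg_qbinom (hn : 0 < n) {m k : ℕ} (hm : m < n) : Reg n (qbinom (m : ℤ) k) := by
  rcases le_or_gt k m with hk | hk
  · refine ⟨∏ t ∈ Finset.range k, (1 - X ^ (m - k + 1 + t)),
      ∏ t ∈ Finset.range k, (1 - (X : Polynomial ℤ) ^ (t + 1)), ?_, ?_⟩
    · intro hd
      obtain ⟨t, hts, hdvd⟩ := ((cyc_prime hn).dvd_finset_prod_iff _).mp hd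
      have : Polynomial.cyclotomic n ℤ ∣ (X : Polynomial ℤ) ^ (t + 1) - 1 := by
        simpa [neg_sub] using hdvd.neg_right
      exact not_dvd_X_pow_sub_one hn (Nat.succ_pos t)
        (by simp at hts; omega) this
    · have hdk : toF (∏ t ∈ Finset.range k, (1 - (X : Polynomial ℤ) ^ (t + 1))) = dk k := by
        rw [toF, map_prod, dk]
        exact Finset.prod_congr rfl fun t _ => by simp [qv]
      have hnm : toF (∏ t ∈ Finset.range k, (1 - X ^ (m - k + 1 + t))) = nm (m : ℤ) k := by
        rw [toF, map_prod, nm]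
        refine Finset.prod_congr rfl fun t _ => ?_
        simp only [map_sub, map_one, map_pow, aeval_X, qv]
        rw [← zpow_natCast (RatFunc.X : RatFunc ℚ) (m - k + 1 + t)]
        congr 2
        omega
      rw [hdk, hnm, qbinom_eq, div_mul_cancel₀ _ (dk_ne_zero k)]
  · rw [qbinom_zero_of_lt hk]; exact reg_zero hn

lemma good_qv_zpow_sub_one (hn : 0 < n) (m : ℤ) :
    Good n (qv ^ ((n : ℤ) * m) - 1) := by
  have base : ∀ a : ℕ, Good n (qv ^ ((n : ℤ) * a) - 1) := by
    intro a
    rcases Nat.eq_zero_or_pos a with rfl | ha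
    · simpa using good_zero hn
    · obtain ⟨c, hc⟩ : Polynomial.cyclotomic n ℤ ∣ (X : Polynomial ℤ) ^ (n * a) - 1 := by
        refine (cyclotomic.dvd_X_pow_sub_one n ℤ).trans ?_
        simpa [← pow_mul] using sub_dvd_pow_sub_pow ((X : Polynomial ℤ) ^ n) 1 a
      refine ⟨c, 1, not_dvd_one hn, ?_⟩
      rw [← hc]
      have he : qv ^ ((n:ℤ) * (a:ℤ)) = qv ^ ((n * a : ℕ)) := by
        norm_cast
      rw [he]
      simp [toF, qv]
  rcases le_or_gt 0 m with hm' | hm'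
  · lift m to ℕ using hm'
    exact base m
  · have hXY : qv ^ ((n:ℤ)*m) * qv ^ ((n:ℤ)*(((-m).toNat : ℕ) : ℤ)) = 1 := by
      rw [← zpow_add₀ qv_ne_zero,
        show (n:ℤ)*m + (n:ℤ)*(((-m).toNat : ℕ) : ℤ) = 0 by
          have : (((-m).toNat : ℕ) : ℤ) = -m := by omega
          rw [this]; ring, zpow_zero]
    have key : qv ^ ((n : ℤ) * m) - 1
        = (-(qv ^ ((n:ℤ)*m))) * (qv ^ ((n:ℤ)*(((-m).toNat : ℕ) : ℤ)) - 1) := by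
      linear_combination hXY
    rw [key]
    refine good_mul_reg hn ?_ (base _)
    obtain ⟨p, s1, h1, e1⟩ := reg_qv_zpow hn ((n:ℤ)*m)
    exact ⟨-p, s1, h1, by rw [neg_mul, e1, toF, toF, map_neg]⟩

lemma expand {n a i j : ℕ} (hn : 1 ≤ n) (ha : a ≤ n-1) (hj1 : 1 ≤ j) (hj2 : j ≤ n-1-a)
    (hi : i ≤ j) :
    qbinom ((n-1-i : ℕ) : ℤ) (n-1-a-j) = ∑ k ∈ Finset.Icc j (n-1-a),
      qbinom ((n-1-a-i : ℕ) : ℤ) (k-i) * qbinom (a : ℤ) (k-j)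
        * qv ^ (((a:ℤ) + j - k) * ((n:ℤ) - 1 - a - k)) := by
  have hv := vandermonde a (n-1-a-i) (n-1-a-j)
  have hcast : (a:ℤ) + ((n-1-a-i : ℕ) : ℤ) = ((n-1-i : ℕ):ℤ) := by omega
  rw [hcast] at hv
  rw [hv]
  refine Finset.sum_nbij' (i := fun l => l + j) (j := fun k => k - j) ?_ ?_ ?_ ?_ ?_
  · intro l hl; simp at hl ⊢; omega
  · intro k hk; simp at hk ⊢; omega
  · intro l hl; simp at hl ⊢
  · intro k hk; simp at hk ⊢; omega
  · intro l hl
    simp only [Finset.mem_range] at hl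
    have h1 : l + j - j = l := by omega
    have h2 : qbinom ((n-1-a-i : ℕ):ℤ) (n-1-a-j-l) = qbinom ((n-1-a-i : ℕ):ℤ) (l+j-i) := by
      rw [qbinom_symm (by omega : n-1-a-j-l ≤ n-1-a-i)]
      congr 1
      omega
    rw [h1, h2]
    have h3 : ((a:ℤ) - l) * (((n-1-a-j : ℕ):ℤ) - l)
        = ((a:ℤ) + j - (l+j:ℕ)) * ((n:ℤ) - 1 - a - (l+j:ℕ)) := by
      have c1 : ((a:ℤ) - l) = ((a:ℤ) + j - (l+j:ℕ)) := by push_cast; ring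
      have c2 : (((n-1-a-j : ℕ):ℤ) - l) = ((n:ℤ) - 1 - a - (l+j:ℕ)) := by
        push_cast [Nat.cast_sub]
        omega
      rw [c1, c2]
    rw [h3]
    ring

end S17

open S17 in
/-- For `a ≤ n-1`, `1 ≤ j ≤ n-1-a`, `0 ≤ i ≤ j`:
`Σ_{k=j}^{n-1-a} q^{k²+k-j(k-j)} [n-1-a-i, k-i][a, k-j]
  ≡ q^{a²+a+j²+j+aj} [n-1-i, n-1-a-j] (mod Φ_n(q))`. -/
theorem stmt17 (n a i j : ℕ) (hn : 1 ≤ n) (ha : a ≤ n - 1)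
    (hj1 : 1 ≤ j) (hj2 : j ≤ n - 1 - a) (hi : i ≤ j) :
    modCong n 1
      (∑ k ∈ Finset.Icc j (n - 1 - a),
        qv ^ ((k : ℤ) ^ 2 + k - (j : ℤ) * ((k : ℤ) - j)) *
          qbinom ((n : ℤ) - 1 - a - i) (k - i) * qbinom a (k - j))
      (qv ^ ((a : ℤ) ^ 2 + a + (j : ℤ) ^ 2 + j + (a : ℤ) * j) *
        qbinom ((n : ℤ) - 1 - i) (n - 1 - a - j)) := by
  have hn' : 0 < n := hn
  apply modCong_of_good
  have hc1 : ((n:ℤ)-1-↑a-↑i) = ((n-1-a-i : ℕ):ℤ) := by omega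
  have hc2 : ((n:ℤ)-1-↑i) = ((n-1-i : ℕ):ℤ) := by omega
  have hA : (∑ k ∈ Finset.Icc j (n - 1 - a),
        qv ^ ((k : ℤ) ^ 2 + k - (j : ℤ) * ((k : ℤ) - j)) *
          qbinom ((n : ℤ) - 1 - a - i) (k - i) * qbinom a (k - j))
      - (qv ^ ((a : ℤ) ^ 2 + a + (j : ℤ) ^ 2 + j + (a : ℤ) * j) *
        qbinom ((n : ℤ) - 1 - i) (n - 1 - a - j))
    = ∑ k ∈ Finset.Icc j (n-1-a),
        (qbinom ((n-1-a-i : ℕ):ℤ) (k-i) * qbinom (a:ℤ) (k-j)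
            * qv ^ (((a:ℤ)^2+a+(j:ℤ)^2+j+(a:ℤ)*j) + ((a:ℤ)+j-k)*((n:ℤ)-1-a-k)))
          * (qv ^ ((n:ℤ)*((k:ℤ)-↑a-↑j)) - 1) := by
    rw [hc1, hc2, expand hn ha hj1 hj2 hi, Finset.mul_sum, ← Finset.sum_sub_distrib]
    refine Finset.sum_congr rfl fun k hk => ?_
    have e1 : qv ^ ((a : ℤ) ^ 2 + a + (j : ℤ) ^ 2 + j + (a : ℤ) * j)
          * qv ^ (((a:ℤ)+j-k)*((n:ℤ)-1-a-k))
        = qv ^ (((a:ℤ)^2+a+(j:ℤ)^2+j+(a:ℤ)*j) + ((a:ℤ)+j-k)*((n:ℤ)-1-a-k)) := by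
      rw [← zpow_add₀ qv_ne_zero]
    have e2 : qv ^ ((k : ℤ) ^ 2 + k - (j : ℤ) * ((k : ℤ) - j))
        = qv ^ (((a:ℤ)^2+a+(j:ℤ)^2+j+(a:ℤ)*j) + ((a:ℤ)+j-k)*((n:ℤ)-1-a-k))
          * qv ^ ((n:ℤ)*((k:ℤ)-↑a-↑j)) := by
      rw [← zpow_add₀ qv_ne_zero]
      congr 1
      ring
    linear_combination (qbinom ((n-1-a-i : ℕ):ℤ) (k-i) * qbinom (a:ℤ) (k-j)) * e2
      - (qbinom ((n-1-a-i : ℕ):ℤ) (k-i) * qbinom (a:ℤ) (k-j)) * e1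
  rw [hA]
  apply good_sum hn'
  intro k hk
  apply good_mul_reg hn'
  · exact reg_mul hn' (reg_mul hn' (reg_qbinom hn' (by omega)) (reg_qbinom hn' (by omega)))
      (reg_qv_zpow hn' _)
  · exact good_qv_zpow_sub_one hn' ((k:ℤ)-↑a-↑j)
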